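/- Let n ≥ 2 and let c, k be integers with 1 ≤ c ≤ n−1 and 1 ≤ k ≤ n−1. Set r = n / gcd(n, c), and define the rational number a = c(n−k)/n if c ≤ k, and a = k(n−c)/n if c > k. Then a is an integer if and only if k is a multiple of r. In particular, a is nonzero (i.e., α_c occurs in μ_k) if and only if k is not a multiple of r. -/

import Mathlib

lemma aux_dvd (n c k : ℕ) (hn : 0 < n) : n ∣ c * k ↔ (n / Nat.gcd n c) ∣ k := by
  have hg : 0 < Nat.gcd n c := Nat.gcd_pos_of_pos_left c hn
  have h1 : Nat.gcd n c * (n / Nat.gcd n c) = n := Nat.mul_div_cancel' (Nat.gcd_dvd_left n c)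
  have h2 : Nat.gcd n c * (c / Nat.gcd n c) = c := Nat.mul_div_cancel' (Nat.gcd_dvd_right n c)
  have hcop : Nat.Coprime (n / Nat.gcd n c) (c / Nat.gcd n c) :=
    Nat.coprime_div_gcd_div_gcd hg
  constructor
  · intro h
    have h' : Nat.gcd n c * (n / Nat.gcd n c) ∣ Nat.gcd n c * ((c / Nat.gcd n c) * k) := by
      rw [h1, ← mul_assoc, h2]; exact h
    exact hcop.dvd_of_dvd_mul_left ((Nat.mul_dvd_mul_iff_left hg).mp h')
  · intro h
    have : Nat.gcd n c * (n / Nat.gcd n c) ∣ Nat.gcd n c * ((c / Nat.gcd n c) * k) :=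
      mul_dvd_mul_left _ (h.mul_left _)
    rwa [h1, ← mul_assoc, h2] at this

lemma aux_int (p q : ℤ) (hq : q ≠ 0) : (∃ m : ℤ, (p:ℚ)/(q:ℚ) = (m:ℚ)) ↔ q ∣ p := by
  have hq' : (q:ℚ) ≠ 0 := Int.cast_ne_zero.mpr hq
  constructor
  · rintro ⟨m, hm⟩
    field_simp at hm
    exact ⟨m, by exact_mod_cast hm⟩
  · rintro ⟨m, rfl⟩
    exact ⟨m, by push_cast; field_simp⟩

lemma aux_fract (a : ℚ) : Int.fract a = 0 ↔ ∃ m : ℤ, a = (m:ℚ) := by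
  constructor
  · intro h
    exact ⟨⌊a⌋, by have h2 : a - (⌊a⌋:ℚ) = 0 := h; linarith⟩
  · rintro ⟨m, rfl⟩
    exact Int.fract_intCast m

theorem simple_root_occurs_in_mu_iff
    (n c k : ℕ) (hn : 2 ≤ n) (hc : 1 ≤ c ∧ c ≤ n - 1) (hk : 1 ≤ k ∧ k ≤ n - 1) :
    let r : ℕ := n / Nat.gcd n c
    let a : ℚ := if c ≤ k then ((c : ℚ) * ((n : ℚ) - (k : ℚ))) / (n : ℚ)
      else ((k : ℚ) * ((n : ℚ) - (c : ℚ))) / (n : ℚ)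
    ((∃ m : ℤ, a = (m : ℚ)) ↔ r ∣ k) ∧ (Int.fract a ≠ 0 ↔ ¬ r ∣ k) := by
  intro r a
  have hn0 : 0 < n := by omega
  have hnz : (n:ℤ) ≠ 0 := by exact_mod_cast hn0.ne'
  have hint : (∃ m : ℤ, a = (m : ℚ)) ↔ r ∣ k := by
    rw [← aux_dvd n c k hn0]
    by_cases h : c ≤ k
    · have ha : a = (((c:ℤ) * ((n:ℤ) - (k:ℤ)) : ℤ) : ℚ) / (((n:ℤ)):ℚ) := by
        simp only [a, if_pos h]; push_cast; ring
      rw [ha, aux_int _ _ hnz]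
      have e : ((c:ℤ) * ((n:ℤ) - (k:ℤ))) = (c:ℤ)*(n:ℤ) - (c:ℤ)*(k:ℤ) := by ring
      rw [e, dvd_sub_right (Dvd.dvd.mul_left (dvd_refl (n:ℤ)) c)]
      exact_mod_cast Iff.rfl
    · have ha : a = (((k:ℤ) * ((n:ℤ) - (c:ℤ)) : ℤ) : ℚ) / (((n:ℤ)):ℚ) := by
        simp only [a, if_neg h]; push_cast; ring
      rw [ha, aux_int _ _ hnz]
      have e : ((k:ℤ) * ((n:ℤ) - (c:ℤ))) = (k:ℤ)*(n:ℤ) - (k:ℤ)*(c:ℤ) := by ring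
      rw [e, dvd_sub_right (Dvd.dvd.mul_left (dvd_refl (n:ℤ)) k)]
      rw [mul_comm (c:ℕ) k]
      exact_mod_cast Iff.rfl
  exact ⟨hint, by rw [Ne, aux_fract, hint]⟩
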